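/- Missing information principle, fourth order (Lemma 7 of the paper, order 4, finite mixture form): if p is four times differentiable in θ, then for every θ ∈ U, (d⁴/dθ⁴) log P(θ) = E_θ[ℓ₄] + 4 E_θ^c[ℓ₃ ℓ₁] + 3 E_θ^c[ℓ₂²] + 6 E_θ^c[ℓ₂ ℓ₁²] + E_θ^c[ℓ₁⁴] − 3 (E_θ^c[ℓ₁²])², where ℓ_j abbreviates ℓ_j(θ,·). -/

import Mathlib

noncomputable section

/-- `P(θ) = Σ_x p(θ,x)`. -/
def mixP {𝒳 : Type*} [Fintype 𝒳] (p : ℝ → 𝒳 → ℝ) (θ : ℝ) : ℝ := ∑ x, p θ x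

/-- Posterior weights `w(θ,x) = p(θ,x)/P(θ)`. -/
def mixW {𝒳 : Type*} [Fintype 𝒳] (p : ℝ → 𝒳 → ℝ) (θ : ℝ) (x : 𝒳) : ℝ :=
  p θ x / mixP p θ

/-- Conditional expectation `E_θ[g] = Σ_x w(θ,x) g(x)`. -/
def mixE {𝒳 : Type*} [Fintype 𝒳] (p : ℝ → 𝒳 → ℝ) (θ : ℝ) (g : 𝒳 → ℝ) : ℝ :=
  ∑ x, mixW p θ x * g x

/-- Central conditional moments `E_θ^c[g₁⋯g_r] = Σ_x w(θ,x) ∏ᵢ (gᵢ(x) − E_θ[gᵢ])`. -/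
def mixEc {𝒳 : Type*} [Fintype 𝒳] (p : ℝ → 𝒳 → ℝ) (θ : ℝ) (gs : List (𝒳 → ℝ)) : ℝ :=
  ∑ x, mixW p θ x * (gs.map fun g => g x - mixE p θ g).prod

/-- `ℓ_j(θ,x) = (∂/∂θ)^j log p(θ,x)`. -/
def mixL {𝒳 : Type*} [Fintype 𝒳] (p : ℝ → 𝒳 → ℝ) (j : ℕ) (θ : ℝ) (x : 𝒳) : ℝ :=
  iteratedDeriv j (fun θ' => Real.log (p θ' x)) θ

end

section Auxiliary

open Filter

/-- Leibniz-type recursion between the derivatives of a positive function `f` and the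
derivatives of `log ∘ f`, up to order 4. -/
lemma log_chain (f : ℝ → ℝ) (U : Set ℝ) (hU : IsOpen U)
    (hpos : ∀ t ∈ U, 0 < f t)
    (hdiff : ∀ j < 4, DifferentiableOn ℝ (iteratedDeriv j f) U) (θ : ℝ) (hθ : θ ∈ U) :
    iteratedDeriv 1 f θ = f θ * iteratedDeriv 1 (fun t => Real.log (f t)) θ ∧
    iteratedDeriv 2 f θ = iteratedDeriv 1 f θ * iteratedDeriv 1 (fun t => Real.log (f t)) θ
      + f θ * iteratedDeriv 2 (fun t => Real.log (f t)) θ ∧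
    iteratedDeriv 3 f θ = iteratedDeriv 2 f θ * iteratedDeriv 1 (fun t => Real.log (f t)) θ
      + 2 * iteratedDeriv 1 f θ * iteratedDeriv 2 (fun t => Real.log (f t)) θ
      + f θ * iteratedDeriv 3 (fun t => Real.log (f t)) θ ∧
    iteratedDeriv 4 f θ = iteratedDeriv 3 f θ * iteratedDeriv 1 (fun t => Real.log (f t)) θ
      + 3 * iteratedDeriv 2 f θ * iteratedDeriv 2 (fun t => Real.log (f t)) θ
      + 3 * iteratedDeriv 1 f θ * iteratedDeriv 3 (fun t => Real.log (f t)) θ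
      + f θ * iteratedDeriv 4 (fun t => Real.log (f t)) θ := by
  set g : ℝ → ℝ := fun t => Real.log (f t) with hgdef
  have hne : ∀ t ∈ U, f t ≠ 0 := fun t ht => (hpos t ht).ne'
  have hfj : ∀ j, j < 4 → ∀ t ∈ U, HasDerivAt (iteratedDeriv j f) (iteratedDeriv (j+1) f t) t := by
    intro j hj t ht
    have h := ((hdiff j hj).differentiableAt (hU.mem_nhds ht)).hasDerivAt
    rwa [← iteratedDeriv_succ] at h
  have hf0 : ∀ t ∈ U, HasDerivAt f (iteratedDeriv 1 f t) t := by
    intro t ht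
    have := hfj 0 (by norm_num) t ht
    rwa [iteratedDeriv_zero] at this
  have hf1 : ∀ t ∈ U, HasDerivAt (iteratedDeriv 1 f) (iteratedDeriv 2 f t) t :=
    fun t ht => hfj 1 (by norm_num) t ht
  have hf2 : ∀ t ∈ U, HasDerivAt (iteratedDeriv 2 f) (iteratedDeriv 3 f t) t :=
    fun t ht => hfj 2 (by norm_num) t ht
  have hf3 : ∀ t ∈ U, HasDerivAt (iteratedDeriv 3 f) (iteratedDeriv 4 f t) t :=
    fun t ht => hfj 3 (by norm_num) t ht
  have hc1 : ∀ t ∈ U, iteratedDeriv 1 g t = iteratedDeriv 1 f t / f t := by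
    intro t ht
    rw [iteratedDeriv_one]
    exact ((hf0 t ht).log (hne t ht)).deriv
  have hq1 : ∀ t ∈ U, HasDerivAt (fun t => iteratedDeriv 1 f t / f t)
      ((iteratedDeriv 2 f t * f t - iteratedDeriv 1 f t * iteratedDeriv 1 f t) / f t ^ 2) t :=
    fun t ht => (hf1 t ht).div (hf0 t ht) (hne t ht)
  have hc2 : ∀ t ∈ U, iteratedDeriv 2 g t
      = (iteratedDeriv 2 f t * f t - iteratedDeriv 1 f t * iteratedDeriv 1 f t) / f t ^ 2 := by
    intro t ht
    have heq : deriv (iteratedDeriv 1 g) t = deriv (fun t => iteratedDeriv 1 f t / f t) t :=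
      Filter.EventuallyEq.deriv_eq (Filter.eventuallyEq_of_mem (hU.mem_nhds ht) hc1)
    rw [iteratedDeriv_succ, heq, (hq1 t ht).deriv]
  have hq2 : ∀ t ∈ U, HasDerivAt
      (fun t => (iteratedDeriv 2 f t * f t - iteratedDeriv 1 f t * iteratedDeriv 1 f t) / f t ^ 2)
      (((iteratedDeriv 3 f t * f t + iteratedDeriv 2 f t * iteratedDeriv 1 f t
          - (iteratedDeriv 2 f t * iteratedDeriv 1 f t + iteratedDeriv 1 f t * iteratedDeriv 2 f t)) * f t ^ 2
        - (iteratedDeriv 2 f t * f t - iteratedDeriv 1 f t * iteratedDeriv 1 f t)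
            * ((2 : ℕ) * f t ^ (2 - 1) * iteratedDeriv 1 f t)) / (f t ^ 2) ^ 2) t :=
    fun t ht => (((hf2 t ht).mul (hf0 t ht)).sub ((hf1 t ht).mul (hf1 t ht))).div
      ((hf0 t ht).pow 2) (pow_ne_zero 2 (hne t ht))
  have hc3 : ∀ t ∈ U, iteratedDeriv 3 g t
      = ((iteratedDeriv 3 f t * f t + iteratedDeriv 2 f t * iteratedDeriv 1 f t
          - (iteratedDeriv 2 f t * iteratedDeriv 1 f t + iteratedDeriv 1 f t * iteratedDeriv 2 f t)) * f t ^ 2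
        - (iteratedDeriv 2 f t * f t - iteratedDeriv 1 f t * iteratedDeriv 1 f t)
            * ((2 : ℕ) * f t ^ (2 - 1) * iteratedDeriv 1 f t)) / (f t ^ 2) ^ 2 := by
    intro t ht
    have heq : deriv (iteratedDeriv 2 g) t = deriv
        (fun t => (iteratedDeriv 2 f t * f t - iteratedDeriv 1 f t * iteratedDeriv 1 f t) / f t ^ 2) t :=
      Filter.EventuallyEq.deriv_eq (Filter.eventuallyEq_of_mem (hU.mem_nhds ht) hc2)
    rw [iteratedDeriv_succ, heq, (hq2 t ht).deriv]
  have hd3 := ((((((hf3 θ hθ).mul (hf0 θ hθ)).add ((hf2 θ hθ).mul (hf1 θ hθ))).sub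
        (((hf2 θ hθ).mul (hf1 θ hθ)).add ((hf1 θ hθ).mul (hf2 θ hθ)))).mul ((hf0 θ hθ).pow 2)).sub
      ((((hf2 θ hθ).mul (hf0 θ hθ)).sub ((hf1 θ hθ).mul (hf1 θ hθ))).mul
        ((((hf0 θ hθ).pow (2-1)).const_mul ((2:ℕ):ℝ)).mul (hf1 θ hθ)))).div
      (((hf0 θ hθ).pow 2).pow 2) (pow_ne_zero 2 (pow_ne_zero 2 (hne θ hθ)))
  have e4step := ((Filter.eventuallyEq_of_mem (hU.mem_nhds hθ) hc3).deriv_eq).trans hd3.deriv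
  have e4 : iteratedDeriv 4 g θ = _ := (congrFun (iteratedDeriv_succ (n := 3)) θ).trans e4step
  have hfθ := hne θ hθ
  have e1 := hc1 θ hθ
  have e2 := hc2 θ hθ
  have e3 := hc3 θ hθ
  refine ⟨?_, ?_, ?_, ?_⟩
  · rw [e1]; field_simp
  · rw [e1, e2]; field_simp; ring
  · rw [e1, e2, e3]; field_simp; ring
  · rw [e1, e2, e3, e4]; simp only [Pi.add_apply, Pi.sub_apply, Pi.mul_apply, Pi.pow_apply, Pi.div_apply]; field_simp; ring

lemma mixP_iter {𝒳 : Type*} [Fintype 𝒳] (p : ℝ → 𝒳 → ℝ) (U : Set ℝ) (hU : IsOpen U)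
    (hdiff : ∀ x, ∀ j < 4, DifferentiableOn ℝ (iteratedDeriv j (fun θ => p θ x)) U) :
    ∀ j, j ≤ 4 → ∀ t ∈ U,
      iteratedDeriv j (fun θ' => mixP p θ') t = ∑ x, iteratedDeriv j (fun θ => p θ x) t := by
  intro j
  induction j with
  | zero => intro _ t _; simp [iteratedDeriv_zero, mixP]
  | succ j ih =>
    intro hj t ht
    have hj4 : j < 4 := lt_of_lt_of_le (Nat.lt_succ_self j) hj
    have heq : deriv (iteratedDeriv j (fun θ' => mixP p θ')) t
        = deriv (fun t => ∑ x, iteratedDeriv j (fun θ => p θ x) t) t :=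
      Filter.EventuallyEq.deriv_eq (Filter.eventuallyEq_of_mem (hU.mem_nhds ht)
        (fun s hs => ih (le_of_lt hj4) s hs))
    rw [iteratedDeriv_succ, heq]
    have hsum : HasDerivAt (fun t => ∑ x, iteratedDeriv j (fun θ => p θ x) t)
        (∑ x, iteratedDeriv (j+1) (fun θ => p θ x) t) t := by
      apply HasDerivAt.fun_sum
      intro x _
      have h := ((hdiff x j hj4).differentiableAt (hU.mem_nhds ht)).hasDerivAt
      rwa [← iteratedDeriv_succ] at h
    exact hsum.deriv

lemma mixP_diff {𝒳 : Type*} [Fintype 𝒳] (p : ℝ → 𝒳 → ℝ) (U : Set ℝ) (hU : IsOpen U)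
    (hdiff : ∀ x, ∀ j < 4, DifferentiableOn ℝ (iteratedDeriv j (fun θ => p θ x)) U) :
    ∀ j < 4, DifferentiableOn ℝ (iteratedDeriv j (fun θ' => mixP p θ')) U := by
  intro j hj
  have hs : DifferentiableOn ℝ (fun t => ∑ x, iteratedDeriv j (fun θ => p θ x) t) U := by
    apply DifferentiableOn.fun_sum
    intro x _
    exact hdiff x j hj
  exact hs.congr (fun t ht => mixP_iter p U hU hdiff j (le_of_lt hj) t ht)

lemma wsum_ec2 {𝒳 : Type*} [Fintype 𝒳] (W g h : 𝒳 → ℝ) (h1 : ∑ x, W x = 1) :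
    ∑ x, W x * ((g x - ∑ y, W y * g y) * (h x - ∑ y, W y * h y))
      = ∑ x, W x * (g x * h x) - (∑ x, W x * g x) * (∑ x, W x * h x) := by
  set G := ∑ y, W y * g y with hG
  set H := ∑ y, W y * h y with hH
  have hpt : ∀ x ∈ Finset.univ, W x * ((g x - G) * (h x - H))
      = W x * (g x * h x) - H * (W x * g x) - G * (W x * h x) + (G * H) * W x := by
    intro x _; ring
  rw [Finset.sum_congr rfl hpt]
  simp only [Finset.sum_add_distrib, Finset.sum_sub_distrib, ← Finset.mul_sum]
  rw [h1]
  ring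

lemma wsum_ec3 {𝒳 : Type*} [Fintype 𝒳] (W g h : 𝒳 → ℝ) (h1 : ∑ x, W x = 1) :
    ∑ x, W x * ((g x - ∑ y, W y * g y) * ((h x - ∑ y, W y * h y) * (h x - ∑ y, W y * h y)))
      = ∑ x, W x * (g x * (h x * h x))
        - (∑ x, W x * g x) * (∑ x, W x * (h x * h x))
        - 2 * (∑ x, W x * h x) * (∑ x, W x * (g x * h x))
        + 2 * (∑ x, W x * g x) * (∑ x, W x * h x) ^ 2 := by
  set G := ∑ y, W y * g y with hG
  set H := ∑ y, W y * h y with hH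
  have hpt : ∀ x ∈ Finset.univ, W x * ((g x - G) * ((h x - H) * (h x - H)))
      = W x * (g x * (h x * h x)) - (2 * H) * (W x * (g x * h x)) + (H * H) * (W x * g x)
        - G * (W x * (h x * h x)) + (2 * G * H) * (W x * h x) - (G * H * H) * W x := by
    intro x _; ring
  rw [Finset.sum_congr rfl hpt]
  simp only [Finset.sum_add_distrib, Finset.sum_sub_distrib, ← Finset.mul_sum]
  rw [h1]
  ring

lemma wsum_ec4 {𝒳 : Type*} [Fintype 𝒳] (W g : 𝒳 → ℝ) (h1 : ∑ x, W x = 1) :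
    ∑ x, W x * ((g x - ∑ y, W y * g y) * ((g x - ∑ y, W y * g y)
        * ((g x - ∑ y, W y * g y) * (g x - ∑ y, W y * g y))))
      = ∑ x, W x * (g x * (g x * (g x * g x)))
        - 4 * (∑ x, W x * g x) * (∑ x, W x * (g x * (g x * g x)))
        + 6 * (∑ x, W x * g x) ^ 2 * (∑ x, W x * (g x * g x))
        - 3 * (∑ x, W x * g x) ^ 4 := by
  set G := ∑ y, W y * g y with hG
  have hpt : ∀ x ∈ Finset.univ, W x * ((g x - G) * ((g x - G) * ((g x - G) * (g x - G))))
      = W x * (g x * (g x * (g x * g x))) - (4 * G) * (W x * (g x * (g x * g x)))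
        + (6 * G * G) * (W x * (g x * g x)) - (4 * G * G * G) * (W x * g x)
        + (G * G * G * G) * W x := by
    intro x _; ring
  rw [Finset.sum_congr rfl hpt]
  simp only [Finset.sum_add_distrib, Finset.sum_sub_distrib, ← Finset.mul_sum]
  rw [h1]
  ring

end Auxiliary

/-- Missing information principle, fourth order (finite mixture form): if `p` is four times
differentiable in `θ`, then for every `θ ∈ U`,
`(d⁴/dθ⁴) log P(θ) = E_θ[ℓ₄] + 4E_θ^c[ℓ₃ℓ₁] + 3E_θ^c[ℓ₂²] + 6E_θ^c[ℓ₂ℓ₁²] + E_θ^c[ℓ₁⁴]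
  − 3(E_θ^c[ℓ₁²])²`. -/
theorem stmt4 {𝒳 : Type*} [Fintype 𝒳] [Nonempty 𝒳]
    (U : Set ℝ) (hU : IsOpen U) (p : ℝ → 𝒳 → ℝ)
    (hpos : ∀ θ ∈ U, ∀ x, 0 < p θ x)
    (hdiff : ∀ x, ∀ j < 4, DifferentiableOn ℝ (iteratedDeriv j (fun θ => p θ x)) U) :
    ∀ θ ∈ U,
      iteratedDeriv 4 (fun θ' => Real.log (mixP p θ')) θ
        = mixE p θ (mixL p 4 θ)
          + 4 * mixEc p θ [mixL p 3 θ, mixL p 1 θ]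
          + 3 * mixEc p θ [mixL p 2 θ, mixL p 2 θ]
          + 6 * mixEc p θ [mixL p 2 θ, mixL p 1 θ, mixL p 1 θ]
          + mixEc p θ [mixL p 1 θ, mixL p 1 θ, mixL p 1 θ, mixL p 1 θ]
          - 3 * (mixEc p θ [mixL p 1 θ, mixL p 1 θ]) ^ 2 := by
  intro θ hθ
  classical
  have Ppos : ∀ t ∈ U, 0 < mixP p t := fun t ht =>
    Finset.sum_pos (fun x _ => hpos t ht x) Finset.univ_nonempty
  have Pne : mixP p θ ≠ 0 := (Ppos θ hθ).ne'
  obtain ⟨hP1, hP2, hP3, hP4⟩ :=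
    log_chain (fun θ' => mixP p θ') U hU Ppos (mixP_diff p U hU hdiff) θ hθ
  have hkx : ∀ x : 𝒳,
      iteratedDeriv 1 (fun t => p t x) θ = p θ x * mixL p 1 θ x ∧
      iteratedDeriv 2 (fun t => p t x) θ
        = iteratedDeriv 1 (fun t => p t x) θ * mixL p 1 θ x + p θ x * mixL p 2 θ x ∧
      iteratedDeriv 3 (fun t => p t x) θ
        = iteratedDeriv 2 (fun t => p t x) θ * mixL p 1 θ x
          + 2 * iteratedDeriv 1 (fun t => p t x) θ * mixL p 2 θ x + p θ x * mixL p 3 θ x ∧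
      iteratedDeriv 4 (fun t => p t x) θ
        = iteratedDeriv 3 (fun t => p t x) θ * mixL p 1 θ x
          + 3 * iteratedDeriv 2 (fun t => p t x) θ * mixL p 2 θ x
          + 3 * iteratedDeriv 1 (fun t => p t x) θ * mixL p 3 θ x + p θ x * mixL p 4 θ x :=
    fun x => log_chain (fun t => p t x) U hU (fun t ht => hpos t ht x) (hdiff x) θ hθ
  have hSum1 : iteratedDeriv 1 (fun θ' => mixP p θ') θ = ∑ x, iteratedDeriv 1 (fun t => p t x) θ :=
    mixP_iter p U hU hdiff 1 (by norm_num) θ hθ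
  have hSum2 : iteratedDeriv 2 (fun θ' => mixP p θ') θ = ∑ x, iteratedDeriv 2 (fun t => p t x) θ :=
    mixP_iter p U hU hdiff 2 (by norm_num) θ hθ
  have hSum3 : iteratedDeriv 3 (fun θ' => mixP p θ') θ = ∑ x, iteratedDeriv 3 (fun t => p t x) θ :=
    mixP_iter p U hU hdiff 3 (by norm_num) θ hθ
  have hSum4 : iteratedDeriv 4 (fun θ' => mixP p θ') θ = ∑ x, iteratedDeriv 4 (fun t => p t x) θ :=
    mixP_iter p U hU hdiff 4 (by norm_num) θ hθ
  have hW1 : ∑ x, mixW p θ x = 1 := by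
    simp only [mixW]
    rw [← Finset.sum_div, show ∑ x, p θ x = mixP p θ from rfl, div_self Pne]
  have hS1 : ∑ x, mixW p θ x * mixL p 1 θ x
      = iteratedDeriv 1 (fun θ' => mixP p θ') θ / mixP p θ := by
    have hpt : ∀ x ∈ Finset.univ, mixW p θ x * mixL p 1 θ x
        = iteratedDeriv 1 (fun t => p t x) θ / mixP p θ := by
      intro x _
      rw [(hkx x).1]
      simp only [mixW]
      ring
    rw [Finset.sum_congr rfl hpt, ← Finset.sum_div, ← hSum1]
  have hS2 : ∑ x, mixW p θ x * mixL p 2 θ x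
      = iteratedDeriv 2 (fun θ' => mixP p θ') θ / mixP p θ
        - ∑ x, mixW p θ x * (mixL p 1 θ x * mixL p 1 θ x) := by
    have hpt : ∀ x ∈ Finset.univ, mixW p θ x * mixL p 2 θ x
        = iteratedDeriv 2 (fun t => p t x) θ / mixP p θ
          - mixW p θ x * (mixL p 1 θ x * mixL p 1 θ x) := by
      intro x _
      rw [(hkx x).2.1, (hkx x).1]
      simp only [mixW]
      field_simp
      ring
    rw [Finset.sum_congr rfl hpt, Finset.sum_sub_distrib, ← Finset.sum_div, ← hSum2]
  have hS3 : ∑ x, mixW p θ x * mixL p 3 θ x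
      = iteratedDeriv 3 (fun θ' => mixP p θ') θ / mixP p θ
        - 3 * ∑ x, mixW p θ x * (mixL p 2 θ x * mixL p 1 θ x)
        - ∑ x, mixW p θ x * (mixL p 1 θ x * (mixL p 1 θ x * mixL p 1 θ x)) := by
    have hpt : ∀ x ∈ Finset.univ, mixW p θ x * mixL p 3 θ x
        = iteratedDeriv 3 (fun t => p t x) θ / mixP p θ
          - 3 * (mixW p θ x * (mixL p 2 θ x * mixL p 1 θ x))
          - mixW p θ x * (mixL p 1 θ x * (mixL p 1 θ x * mixL p 1 θ x)) := by
      intro x _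
      rw [(hkx x).2.2.1, (hkx x).2.1, (hkx x).1]
      simp only [mixW]
      field_simp
      ring
    rw [Finset.sum_congr rfl hpt]
    simp only [Finset.sum_sub_distrib, ← Finset.mul_sum]
    rw [← Finset.sum_div, ← hSum3]
  have hS4 : ∑ x, mixW p θ x * mixL p 4 θ x
      = iteratedDeriv 4 (fun θ' => mixP p θ') θ / mixP p θ
        - 4 * ∑ x, mixW p θ x * (mixL p 3 θ x * mixL p 1 θ x)
        - 3 * ∑ x, mixW p θ x * (mixL p 2 θ x * mixL p 2 θ x)
        - 6 * ∑ x, mixW p θ x * (mixL p 2 θ x * (mixL p 1 θ x * mixL p 1 θ x))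
        - ∑ x, mixW p θ x * (mixL p 1 θ x * (mixL p 1 θ x * (mixL p 1 θ x * mixL p 1 θ x))) := by
    have hpt : ∀ x ∈ Finset.univ, mixW p θ x * mixL p 4 θ x
        = iteratedDeriv 4 (fun t => p t x) θ / mixP p θ
          - 4 * (mixW p θ x * (mixL p 3 θ x * mixL p 1 θ x))
          - 3 * (mixW p θ x * (mixL p 2 θ x * mixL p 2 θ x))
          - 6 * (mixW p θ x * (mixL p 2 θ x * (mixL p 1 θ x * mixL p 1 θ x)))
          - mixW p θ x * (mixL p 1 θ x * (mixL p 1 θ x * (mixL p 1 θ x * mixL p 1 θ x))) := by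
      intro x _
      rw [(hkx x).2.2.2, (hkx x).2.2.1, (hkx x).2.1, (hkx x).1]
      simp only [mixW]
      field_simp
      ring
    rw [Finset.sum_congr rfl hpt]
    simp only [Finset.sum_sub_distrib, ← Finset.mul_sum]
    rw [← Finset.sum_div, ← hSum4]
  simp only [mixEc, mixE, List.map_cons, List.map_nil, List.prod_cons, List.prod_nil, mul_one]
  rw [wsum_ec2 (mixW p θ) (mixL p 3 θ) (mixL p 1 θ) hW1,
    wsum_ec2 (mixW p θ) (mixL p 2 θ) (mixL p 2 θ) hW1,
    wsum_ec3 (mixW p θ) (mixL p 2 θ) (mixL p 1 θ) hW1,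
    wsum_ec4 (mixW p θ) (mixL p 1 θ) hW1,
    wsum_ec2 (mixW p θ) (mixL p 1 θ) (mixL p 1 θ) hW1,
    hS4, hS3, hS2, hS1, hP4, hP3, hP2, hP1]
  field_simp
  ring
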